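/- Suppose matrices A_n(z) = U(z) z^{-n} + A_n^+(z) with A_n^+(z) = O(z) as z → 0 satisfy the zero-curvature equations [∂_{t_m} - A_m(z), ∂_{t_n} - A_n(z)] = 0 for all m, n ≥ 1. Then for each n, [∂_{t_n} - A_n(z), U(z)] = O(z^{m-n}) for every m, and hence [∂_{t_n} - A_n(z), U(z)] = 0 as a Laurent series identity. -/

import Mathlib

/-- `MatOrd X k` : the 2×2 matrix `X` of Laurent series is `O(z^k)`, i.e.
all its entries have no terms of degree below `k`. -/
def MatOrd (X : Matrix (Fin 2) (Fin 2) (LaurentSeries ℂ)) (k : ℤ) : Prop :=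
  ∀ i j, ∀ l : ℤ, l < k → (X i j).coeff l = 0

set_option maxHeartbeats 1000000
set_option synthInstance.maxHeartbeats 1000000

namespace Stmt8Aux

lemma matord_mono {X : Matrix (Fin 2) (Fin 2) (LaurentSeries ℂ)} {k k' : ℤ}
    (h : k' ≤ k) (hX : MatOrd X k) : MatOrd X k' :=
  fun i j l hl => hX i j l (lt_of_lt_of_le hl h)

lemma matord_add {X Y : Matrix (Fin 2) (Fin 2) (LaurentSeries ℂ)} {k : ℤ}
    (hX : MatOrd X k) (hY : MatOrd Y k) : MatOrd (X + Y) k := by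
  intro i j l hl
  simp [Matrix.add_apply, hX i j l hl, hY i j l hl]

lemma matord_sub {X Y : Matrix (Fin 2) (Fin 2) (LaurentSeries ℂ)} {k : ℤ}
    (hX : MatOrd X k) (hY : MatOrd Y k) : MatOrd (X - Y) k := by
  intro i j l hl
  simp [Matrix.sub_apply, hX i j l hl, hY i j l hl]

lemma coeff_mul_eq_zero {f g : LaurentSeries ℂ} {a b l : ℤ}
    (hf : ∀ l' : ℤ, l' < a → f.coeff l' = 0) (hg : ∀ l' : ℤ, l' < b → g.coeff l' = 0)
    (hl : l < a + b) : (f * g).coeff l = 0 := by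
  rw [HahnSeries.coeff_mul]
  apply Finset.sum_eq_zero
  intro ij hij
  rw [Finset.mem_addAntidiagonal] at hij
  obtain ⟨h1, h2, h3⟩ := hij
  have ha : a ≤ ij.1 := by
    by_contra hc
    exact h1 (hf ij.1 (not_le.mp hc))
  have hb : b ≤ ij.2 := by
    by_contra hc
    exact h2 (hg ij.2 (not_le.mp hc))
  omega

lemma matord_mul {X Y : Matrix (Fin 2) (Fin 2) (LaurentSeries ℂ)} {a b : ℤ}
    (hX : MatOrd X a) (hY : MatOrd Y b) : MatOrd (X * Y) (a + b) := by
  intro i j l hl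
  rw [Matrix.mul_apply, Fin.sum_univ_two, HahnSeries.coeff_add]
  rw [coeff_mul_eq_zero (hX i 0) (hY 0 j) hl, coeff_mul_eq_zero (hX i 1) (hY 1 j) hl, add_zero]

lemma matord_smul_single {X : Matrix (Fin 2) (Fin 2) (LaurentSeries ℂ)} {k : ℤ}
    (a : ℤ) (hX : MatOrd X k) :
    MatOrd ((HahnSeries.single a (1 : ℂ) : LaurentSeries ℂ) • X) (k + a) := by
  intro i j l hl
  rw [Matrix.smul_apply, smul_eq_mul]
  have h : l = (l - a) + a := by ring
  rw [h, HahnSeries.coeff_single_mul_add, one_mul]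
  exact hX i j (l - a) (by omega)

lemma single_smul_cancel (a : ℤ) (X : Matrix (Fin 2) (Fin 2) (LaurentSeries ℂ)) :
    (HahnSeries.single a (1 : ℂ) : LaurentSeries ℂ) •
      (HahnSeries.single (-a) (1 : ℂ) : LaurentSeries ℂ) • X = X := by
  ext i j
  rw [Matrix.smul_apply, Matrix.smul_apply, smul_eq_mul, smul_eq_mul, ← mul_assoc,
    HahnSeries.single_mul_single, mul_one, add_neg_cancel, HahnSeries.single_zero_one, one_mul]

lemma smul_add_mat (c : LaurentSeries ℂ) (X Y : Matrix (Fin 2) (Fin 2) (LaurentSeries ℂ)) :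
    c • (X + Y) = c • X + c • Y := by
  ext i j
  simp only [Matrix.smul_apply, Matrix.add_apply, smul_eq_mul, mul_add]

lemma single_smul_single_smul (a b : ℤ) (X : Matrix (Fin 2) (Fin 2) (LaurentSeries ℂ)) :
    (HahnSeries.single a (1 : ℂ) : LaurentSeries ℂ) •
      (HahnSeries.single b (1 : ℂ) : LaurentSeries ℂ) • X
      = (HahnSeries.single (a + b) (1 : ℂ) : LaurentSeries ℂ) • X := by
  ext i j
  rw [Matrix.smul_apply, Matrix.smul_apply, Matrix.smul_apply, smul_eq_mul, smul_eq_mul,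
    smul_eq_mul, ← mul_assoc, HahnSeries.single_mul_single, mul_one]

lemma matord_U_exists (U : Matrix (Fin 2) (Fin 2) (LaurentSeries ℂ)) :
    ∃ u : ℤ, u ≤ 0 ∧ MatOrd U u := by
  refine ⟨min 0 (min (min ((U 0 0).order) ((U 0 1).order))
    (min ((U 1 0).order) ((U 1 1).order))), min_le_left _ _, ?_⟩
  intro i j l hl
  apply HahnSeries.coeff_eq_zero_of_lt_order
  refine lt_of_lt_of_le hl ?_
  fin_cases i <;> fin_cases j <;>
    simp only [Fin.zero_eta, Fin.mk_one, Fin.isValue] <;> omega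

end Stmt8Aux

open Stmt8Aux in
/-- if `A_n(z) = U(z) z⁻ⁿ + A_n⁺(z)` with `A_n⁺ = O(z)` satisfy
the zero-curvature equations for all `m, n`, then for each `n`,
`[∂_{t_n} - A_n, U] = O(z^{m-n})` for every `m`, hence `[∂_{t_n} - A_n, U] = 0`. -/
theorem stmt8
    (D : ℕ → Matrix (Fin 2) (Fin 2) (LaurentSeries ℂ) →
      Matrix (Fin 2) (Fin 2) (LaurentSeries ℂ))
    (hadd : ∀ m a b, D m (a + b) = D m a + D m b)
    (hmul : ∀ m a b, D m (a * b) = D m a * b + a * D m b)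
    (hDz : ∀ m (c : LaurentSeries ℂ) X, D m (c • X) = c • D m X)
    (hDord : ∀ m X k, MatOrd X k → MatOrd (D m X) k)
    (A Ap : ℕ → Matrix (Fin 2) (Fin 2) (LaurentSeries ℂ))
    (U : Matrix (Fin 2) (Fin 2) (LaurentSeries ℂ))
    (hA : ∀ n : ℕ, A n =
      (HahnSeries.single (-(n : ℤ)) (1 : ℂ) : LaurentSeries ℂ) • U + Ap n)
    (hAp : ∀ n, MatOrd (Ap n) 1)
    (hzc : ∀ m n, D n (A m) - D m (A n) + (A m * A n - A n * A m) = 0) :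
    (∀ n m : ℕ, MatOrd (D n U - (A n * U - U * A n)) ((m : ℤ) - (n : ℤ))) ∧
    (∀ n, D n U - (A n * U - U * A n) = 0) := by
  have hmain : ∀ m n : ℕ,
      (HahnSeries.single (-(m : ℤ)) (1 : ℂ) : LaurentSeries ℂ) •
        (D n U - (A n * U - U * A n))
      = (HahnSeries.single (-(n : ℤ)) (1 : ℂ) : LaurentSeries ℂ) •
        (D m U - (A m * U - U * A m))
        + (D m (Ap n) - D n (Ap m) - (Ap m * Ap n - Ap n * Ap m)) := by
    intro m n
    rw [← sub_eq_zero]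
    have e : (HahnSeries.single (-(m : ℤ)) (1 : ℂ) : LaurentSeries ℂ) •
        (D n U - (A n * U - U * A n))
        - ((HahnSeries.single (-(n : ℤ)) (1 : ℂ) : LaurentSeries ℂ) •
            (D m U - (A m * U - U * A m))
          + (D m (Ap n) - D n (Ap m) - (Ap m * Ap n - Ap n * Ap m)))
        = D n (A m) - D m (A n) + (A m * A n - A n * A m) := by
      rw [hA m, hA n]
      simp only [hadd, hDz]
      ext i j
      simp only [Matrix.sub_apply, Matrix.add_apply, Matrix.smul_apply, Matrix.mul_apply,
        Fin.sum_univ_two, smul_eq_mul]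
      ring
    rw [e, hzc m n]
  obtain ⟨u, hu0, hU⟩ := matord_U_exists U
  have hC' : ∀ m, D m U - (A m * U - U * A m) = D m U - (Ap m * U - U * Ap m) := by
    intro m
    rw [hA m]
    ext i j
    simp only [Matrix.sub_apply, Matrix.add_apply, Matrix.smul_apply, Matrix.mul_apply,
      Fin.sum_univ_two, smul_eq_mul]
    ring
  have hCord : ∀ m, MatOrd (D m U - (A m * U - U * A m)) u := by
    intro m
    rw [hC' m]
    have h1 : MatOrd (Ap m * U) (1 + u) := matord_mul (hAp m) hU
    have h2 : MatOrd (U * Ap m) (1 + u) :=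
      matord_mono (by omega) (matord_mul hU (hAp m))
    exact matord_sub (hDord m U u hU)
      (matord_mono (by omega) (matord_sub h1 h2))
  have hRord : ∀ m n, MatOrd (D m (Ap n) - D n (Ap m) - (Ap m * Ap n - Ap n * Ap m)) 1 := by
    intro m n
    have h1 : MatOrd (Ap m * Ap n) 2 := matord_mul (hAp m) (hAp n)
    have h2 : MatOrd (Ap n * Ap m) 2 := matord_mul (hAp n) (hAp m)
    exact matord_sub (matord_sub (hDord m _ 1 (hAp n)) (hDord n _ 1 (hAp m)))
      (matord_mono (by omega) (matord_sub h1 h2))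
  have key : ∀ (n : ℕ) (k : ℤ), MatOrd (D n U - (A n * U - U * A n)) k := by
    intro n k
    set m : ℕ := (max (k + n - u) (k - 1)).toNat with hm
    have hm1 : k + n - u ≤ (m : ℤ) := le_trans (le_max_left _ _) (Int.self_le_toNat _)
    have hm2 : k - 1 ≤ (m : ℤ) := le_trans (le_max_right _ _) (Int.self_le_toNat _)
    have e1 : D n U - (A n * U - U * A n)
        = (HahnSeries.single ((m : ℤ)) (1 : ℂ) : LaurentSeries ℂ) •
          ((HahnSeries.single (-(m : ℤ)) (1 : ℂ) : LaurentSeries ℂ) •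
            (D n U - (A n * U - U * A n))) :=
      (single_smul_cancel (m : ℤ) _).symm
    rw [e1, hmain m n, smul_add_mat, single_smul_single_smul]
    refine matord_add (matord_mono ?_ (matord_smul_single _ (hCord m)))
      (matord_mono ?_ (matord_smul_single _ (hRord m n)))
    · omega
    · omega
  refine ⟨fun n m => key n ((m : ℤ) - (n : ℤ)), fun n => ?_⟩
  ext i j l
  simpa using key n (l + 1) i j l (by omega)
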